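/- arXiv:q-alg/9702011 — 2 statements merged into one kernel-verified Lean document; each statement's English description precedes it below -/
import Mathlib

section
/- Let q, k be real with 0 < q < 1 and 0 < k < 1. For n ∈ ℕ define the polynomial P_n(z_1, z_2) := Σ_{m=0}^n [∏_{l=0}^{m−1} (1−q^{k+l})(1−q^{−n+l}) / ((1−q^{1+l})(1−q^{1−n−k+l}))] · q^{(1−k)m} · z_1^m z_2^{n−m} (the terminating series z_2^n F_q(k, −n, −n−k+1, q^{1−k} z_1/z_2)). Then P_n is symmetric: P_n(z_1, z_2) = P_n(z_2, z_1) for all z_1, z_2 ∈ ℂ. -/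
/-- `q^x := exp(x·log q)` for real `q > 0` and complex `x`. -/
noncomputable def qpow (q : ℝ) (x : ℂ) : ℂ := Complex.exp (x * Real.log q)

lemma qpow_add (q : ℝ) (a b : ℂ) : qpow q (a + b) = qpow q a * qpow q b := by
  simp [qpow, ← Complex.exp_add]; ring_nf

lemma qpow_zero (q : ℝ) : qpow q 0 = 1 := by simp [qpow]

lemma qpow_real (q r : ℝ) : qpow q (r : ℂ) = ((Real.exp (r * Real.log q) : ℝ) : ℂ) := by
  simp [qpow, Complex.ofReal_exp]

lemma one_sub_qpow_ne_zero {q : ℝ} (hq0 : 0 < q) (hq1 : q < 1) {r : ℝ} (hr : r ≠ 0) :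
    (1 : ℂ) - qpow q (r : ℂ) ≠ 0 := by
  rw [qpow_real, sub_ne_zero]
  intro h
  have h2 : Real.exp (r * Real.log q) = 1 := by exact_mod_cast h.symm
  rw [Real.exp_eq_one_iff] at h2
  have hL : Real.log q ≠ 0 := by
    intro hL
    rcases Real.log_eq_zero.mp hL with h | h | h <;> nlinarith
  exact hr (by rcases mul_eq_zero.mp h2 with h | h; exact h; exact absurd h hL)

lemma key (q k : ℝ) (a b : ℂ) :
    qpow q (1 - k) * ((1 - qpow q (a - b)) * (1 - qpow q ((k : ℂ) + (b - a - 1)))) =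
    (1 - qpow q (1 - b - (k:ℂ) + a)) * (1 - qpow q (1 + (b - a - 1))) := by
  ring_nf
  simp only [qpow, ← Complex.exp_add]
  ring_nf
  simp only [Complex.exp_zero]
  ring

/-- q-Pochhammer-type product `∏_{l<m} (1 - q^{r+l})`. -/
noncomputable def Poch (q r : ℝ) (m : ℕ) : ℂ :=
  ∏ l ∈ Finset.range m, (1 - qpow q ((r : ℂ) + l))

lemma Poch_ne_zero {q : ℝ} (hq0 : 0 < q) (hq1 : q < 1) {r : ℝ} (hr : 0 < r) (m : ℕ) :
    Poch q r m ≠ 0 := by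
  refine Finset.prod_ne_zero_iff.mpr fun l _ => ?_
  have : ((r : ℂ) + l) = ((r + l : ℝ) : ℂ) := by push_cast; ring
  rw [this]
  exact one_sub_qpow_ne_zero hq0 hq1 (by positivity)

lemma Poch_succ (q r : ℝ) (m : ℕ) :
    Poch q r (m + 1) = Poch q r m * (1 - qpow q ((r : ℂ) + m)) := by
  rw [Poch, Finset.prod_range_succ]; rfl

lemma Poch_zero (q r : ℝ) : Poch q r 0 = 1 := by
  simp [Poch]

lemma alg (A B C D E F x y z w : ℂ) (hz : z ≠ 0) (hw : w ≠ 0) (hy : y ≠ 0)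
    (hD : D ≠ 0) (hE : E ≠ 0) (hF : F ≠ 0) :
    A * (B * w) * C / (D * (E * y) * F) * (x * y / (z * w)) =
    A * x * B * C / (D * z * E * F) := by
  rw [div_mul_div_comm, div_eq_div_iff
    (mul_ne_zero (mul_ne_zero (mul_ne_zero hD (mul_ne_zero hE hy)) hF) (mul_ne_zero hz hw))
    (mul_ne_zero (mul_ne_zero (mul_ne_zero hD hz) hE) hF)]
  ring

/-- Closed form for the coefficient. -/
lemma coeff_eq {q k : ℝ} (hq0 : 0 < q) (hq1 : q < 1) (hk0 : 0 < k) (hk1 : k < 1)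
    (n : ℕ) : ∀ m : ℕ, m ≤ n →
    (∏ l ∈ Finset.range m,
      ((1 - qpow q ((k : ℂ) + l)) * (1 - qpow q ((l : ℂ) - n)) /
        ((1 - qpow q (1 + l)) * (1 - qpow q (1 - (n : ℂ) - k + l))))) *
      qpow q ((1 - (k : ℂ)) * m)
    = Poch q k m * Poch q k (n - m) * Poch q 1 n /
        (Poch q 1 m * Poch q 1 (n - m) * Poch q k n) := by
  intro m
  induction m with
  | zero =>
    intro _
    have h1 : Poch q k n ≠ 0 := Poch_ne_zero hq0 hq1 hk0 n
    have h2 : Poch q 1 n ≠ 0 := Poch_ne_zero hq0 hq1 one_pos n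
    simp only [Finset.prod_range_zero, Nat.cast_zero, mul_zero, qpow_zero, Nat.sub_zero,
      one_mul, Poch_zero]
    field_simp
  | succ m ih =>
    intro hm
    have hm' : m ≤ n := le_of_lt hm
    have hcast : ((n - (m+1) : ℕ) : ℂ) = (n : ℂ) - m - 1 := by
      push_cast [Nat.cast_sub hm]; ring
    have hsub : n - m = (n - (m + 1)) + 1 := by omega
    have hq1k : ((1 - (k:ℂ)) * ((m:ℕ)+1 : ℕ)) = (1-(k:ℂ))*m + (1-k) := by push_cast; ring
    rw [Finset.prod_range_succ, hq1k, qpow_add q ((1 - (k:ℂ)) * m) (1 - k), mul_mul_mul_comm, ih hm']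
    rw [Poch_succ q k m, Poch_succ q 1 m, hsub, Poch_succ q k (n - (m+1)),
      Poch_succ q 1 (n - (m+1)), hcast]
    -- nonzeroness facts
    have c1 : (1 + (m:ℂ)) = ((1 + m : ℝ) : ℂ) := by push_cast; ring
    have c2 : (1 - (n:ℂ) - k + m) = ((1 - n - k + m : ℝ) : ℂ) := by push_cast; ring
    have c3 : ((k:ℂ) + ((n:ℂ) - m - 1)) = ((k + n - m - 1 : ℝ) : ℂ) := by push_cast; ring
    have c4 : ((k:ℂ) + (m:ℂ)) = ((k + m : ℝ) : ℂ) := by push_cast; ring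
    have hnm : (m : ℝ) + 1 ≤ n := by exact_mod_cast hm
    have h1 : (1:ℂ) - qpow q (1 + (m:ℂ)) ≠ 0 := by
      rw [c1]; exact one_sub_qpow_ne_zero hq0 hq1 (by positivity)
    have h2 : (1:ℂ) - qpow q (1 - (n:ℂ) - k + m) ≠ 0 := by
      rw [c2]; exact one_sub_qpow_ne_zero hq0 hq1 (by nlinarith)
    have h3 : (1:ℂ) - qpow q ((k:ℂ) + ((n:ℂ) - m - 1)) ≠ 0 := by
      rw [c3]; exact one_sub_qpow_ne_zero hq0 hq1 (by nlinarith)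
    have h4 : (1:ℂ) - qpow q ((k:ℂ) + (m:ℂ)) ≠ 0 := by
      rw [c4]; exact one_sub_qpow_ne_zero hq0 hq1 (by nlinarith)
    have hT : (1 - qpow q ((k:ℂ) + m)) * (1 - qpow q ((m:ℂ) - n)) /
          ((1 - qpow q (1 + (m:ℂ))) * (1 - qpow q (1 - (n:ℂ) - k + m))) * qpow q (1 - k)
        = (1 - qpow q ((k:ℂ) + m)) * (1 - qpow q (1 + ((n:ℂ) - m - 1))) /
          ((1 - qpow q (1 + (m:ℂ))) * (1 - qpow q ((k:ℂ) + ((n:ℂ) - m - 1)))) := by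
      rw [div_mul_eq_mul_div, div_eq_div_iff (by exact mul_ne_zero h1 h2) (by exact mul_ne_zero h1 h3)]
      linear_combination (1 - qpow q ((k:ℂ) + m)) * (1 - qpow q (1 + (m:ℂ))) * key q k (m:ℂ) (n:ℂ)
    rw [hT]
    have hPk : Poch q k m ≠ 0 := Poch_ne_zero hq0 hq1 hk0 m
    have hP1 : Poch q 1 m ≠ 0 := Poch_ne_zero hq0 hq1 one_pos m
    have hPkj : Poch q k (n - (m+1)) ≠ 0 := Poch_ne_zero hq0 hq1 hk0 _
    have hP1j : Poch q 1 (n - (m+1)) ≠ 0 := Poch_ne_zero hq0 hq1 one_pos _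
    have hPkn : Poch q k n ≠ 0 := Poch_ne_zero hq0 hq1 hk0 n
    have hP1n : Poch q 1 n ≠ 0 := Poch_ne_zero hq0 hq1 one_pos n
    have hone : ((1:ℝ):ℂ) = 1 := by norm_cast
    rw [hone]
    have c5 : (1 + ((n:ℂ) - m - 1)) = ((n - m : ℝ) : ℂ) := by push_cast; ring
    have h5 : (1:ℂ) - qpow q (1 + ((n:ℂ) - m - 1)) ≠ 0 := by
      rw [c5]; exact one_sub_qpow_ne_zero hq0 hq1 (by nlinarith)
    exact alg (Poch q k m) (Poch q k (n - (m+1))) (Poch q 1 n) (Poch q 1 m)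
      (Poch q 1 (n - (m+1))) (Poch q k n) (1 - qpow q ((k:ℂ) + m))
      (1 - qpow q (1 + ((n:ℂ) - m - 1))) (1 - qpow q (1 + (m:ℂ)))
      (1 - qpow q ((k:ℂ) + ((n:ℂ) - m - 1))) h1 h3 h5 hP1 hP1j hPkn

/-- The terminating q-hypergeometric (Macdonald) polynomial of degree `n` in two
variables: `P_n(z₁,z₂) = z₂^n F_q(k, -n, -n-k+1, q^{1-k} z₁/z₂)` written out. -/
noncomputable def macP (q k : ℝ) (n : ℕ) (z1 z2 : ℂ) : ℂ :=
  ∑ m ∈ Finset.range (n + 1),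
    (∏ l ∈ Finset.range m,
      ((1 - qpow q ((k : ℂ) + l)) * (1 - qpow q ((l : ℂ) - n)) /
        ((1 - qpow q (1 + l)) * (1 - qpow q (1 - (n : ℂ) - k + l))))) *
      qpow q ((1 - (k : ℂ)) * m) * z1 ^ m * z2 ^ (n - m)

/-- The Macdonald polynomial `P_n` is symmetric. -/
theorem stmt4 (q k : ℝ) (hq0 : 0 < q) (hq1 : q < 1) (hk0 : 0 < k) (hk1 : k < 1)
    (n : ℕ) (z1 z2 : ℂ) :
    macP q k n z1 z2 = macP q k n z2 z1 := by
  rw [macP, macP]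
  conv_rhs => rw [← Finset.sum_range_reflect]
  refine Finset.sum_congr rfl fun j hj => ?_
  have hjn : j ≤ n := Nat.lt_succ_iff.mp (Finset.mem_range.mp hj)
  have hred : n + 1 - 1 - j = n - j := by omega
  rw [hred, coeff_eq hq0 hq1 hk0 hk1 n j hjn,
    coeff_eq hq0 hq1 hk0 hk1 n (n - j) (Nat.sub_le n j), Nat.sub_sub_self hjn]
  ring
end

section
/- Let q, k be real with 0 < q < 1 and 0 < k < 1, let n ∈ ℕ, and let λ_1, λ_2 ∈ ℂ satisfy Re(λ_2 − λ_1) + n > 0. Let R be real with q^{(1−k)/2} < R < q^{(k−1)/2}. Then the contour integrals over shrinking circles tend to zero: lim_{N → ∞} (1/(2πi)) ∮_{|y| = q^N R} y^n · [Θ_q(q^{λ_2−λ_1+(k+1)/2}/y) / Θ_q(q^{(1+k)/2}/y)] · [(q^{(1+k)/2}/y ; q)_∞ / (q^{(1−k)/2}/y ; q)_∞] · dy/y = 0. -/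
open Complex Filter

/-- The q-Pochhammer symbol `(z;q)_∞ = ∏_{i=0}^∞ (1 - z qⁱ)`. -/
noncomputable def qPochInf (q : ℝ) (z : ℂ) : ℂ := ∏' i : ℕ, (1 - z * (q : ℂ) ^ i)

/-- `Θ_q(z) = (z;q)_∞ (q z⁻¹;q)_∞ (q;q)_∞`. -/
noncomputable def qTheta (q : ℝ) (z : ℂ) : ℂ :=
  qPochInf q z * qPochInf q ((q : ℂ) * z⁻¹) * qPochInf q (q : ℂ)

lemma multipliable_qpoch {q : ℝ} (hq0 : 0 < q) (hq1 : q < 1) (z : ℂ) :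
    Multipliable fun i : ℕ => 1 - z * (q:ℂ)^i := by
  by_cases hz : ∀ i : ℕ, 1 - z * (q:ℂ)^i ≠ 0
  · have hs : Summable fun i : ℕ => ‖-(z * (q:ℂ)^i)‖ := by
      simp only [norm_neg, norm_mul, norm_pow, Complex.norm_real, Real.norm_eq_abs,
        _root_.abs_of_nonneg hq0.le]
      exact (summable_geometric_of_lt_one hq0.le hq1).mul_left ‖z‖
    simpa [sub_eq_add_neg] using multipliable_one_add_of_summable hs
  · push_neg at hz
    obtain ⟨i0, hi0⟩ := hz
    refine ⟨0, ?_⟩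
    have : ∀ s : Finset ℕ, {i0} ⊆ s → (∏ i ∈ s, (1 - z * (q:ℂ)^i)) = 0 := by
      intro s hs
      exact Finset.prod_eq_zero (hs (Finset.mem_singleton_self i0)) hi0
    refine tendsto_nhds_of_eventually_eq ?_
    filter_upwards [Filter.eventually_ge_atTop ({i0} : Finset ℕ)] with s hs using this s hs

lemma tprod_mono_real {f g : ℕ → ℝ} (h0 : ∀ i, 0 ≤ f i) (h : ∀ i, f i ≤ g i)
    (hf : Multipliable f) (hg : Multipliable g) : ∏' i, f i ≤ ∏' i, g i :=
  le_of_tendsto_of_tendsto' hf.hasProd hg.hasProd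
    (fun s => Finset.prod_le_prod (fun i _ => h0 i) (fun i _ => h i))

lemma tprod_ge_of_forall {f : ℕ → ℝ} (hf : Multipliable f) (ε : ℝ)
    (h : ∀ s : Finset ℕ, ε ≤ ∏ i ∈ s, f i) : ε ≤ ∏' i, f i :=
  ge_of_tendsto' hf.hasProd h

lemma multipliable_one_add_real {q x : ℝ} (hq0 : 0 < q) (hq1 : q < 1) (hx : 0 ≤ x) :
    Multipliable fun i : ℕ => 1 + x * q ^ i := by
  have := (multipliable_qpoch hq0 hq1 (-(x:ℂ))).norm
  refine this.congr fun i => ?_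
  have : (1 : ℂ) - -(x:ℂ) * (q:ℂ)^i = ((1 + x * q^i : ℝ) : ℂ) := by push_cast; ring
  rw [this, Complex.norm_real, Real.norm_eq_abs]
  exact _root_.abs_of_nonneg (by positivity)

lemma multipliable_one_sub_real {q x : ℝ} (hq0 : 0 < q) (hq1 : q < 1) (hx : 0 ≤ x) (hx1 : x ≤ 1) :
    Multipliable fun i : ℕ => 1 - x * q ^ i := by
  have := (multipliable_qpoch hq0 hq1 ((x:ℂ))).norm
  refine this.congr fun i => ?_
  have h1 : (1 : ℂ) - (x:ℂ) * (q:ℂ)^i = ((1 - x * q^i : ℝ) : ℂ) := by push_cast; ring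
  have h2 : 0 ≤ 1 - x * q^i := by
    have : x * q ^ i ≤ 1 := by
      have h := pow_le_one₀ hq0.le hq1.le (n := i)
      have h2 : x * q ^ i ≤ x := mul_le_of_le_one_right hx h
      linarith
    linarith
  rw [h1, Complex.norm_real, Real.norm_eq_abs, _root_.abs_of_nonneg h2]

lemma tprod_one_add_ge_one {q x : ℝ} (hq0 : 0 < q) (hq1 : q < 1) (hx : 0 ≤ x) :
    1 ≤ ∏' i : ℕ, (1 + x * q ^ i) := by
  have := tprod_mono_real (f := fun _ : ℕ => 1) (g := fun i : ℕ => 1 + x * q ^ i)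
    (fun _ => zero_le_one) (fun i => by
      show (1:ℝ) ≤ 1 + x * q ^ i
      nlinarith [mul_nonneg hx (pow_nonneg hq0.le i)]) multipliable_one
    (multipliable_one_add_real hq0 hq1 hx)
  simpa using this

lemma tprod_one_sub_pos {q x : ℝ} (hq0 : 0 < q) (hq1 : q < 1) (hx : 0 ≤ x) (hx1 : x < 1) :
    0 < ∏' i : ℕ, (1 - x * q ^ i) := by
  have key : ∀ i : ℕ, Real.exp (-(x * q ^ i) / (1 - x)) ≤ 1 - x * q ^ i := by
    intro i
    set t := x * q ^ i with ht
    have h1 : 0 ≤ t := by positivity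
    have h2 : t ≤ x := by
      have h := pow_le_one₀ hq0.le hq1.le (n := i)
      rw [ht]
      exact mul_le_of_le_one_right hx h
    have h3 : t < 1 := lt_of_le_of_lt h2 hx1
    have h4 : (0:ℝ) < 1 - t := by linarith
    have h5 : Real.exp (t / (1 - t)) ≥ 1 / (1 - t) := by
      have := Real.add_one_le_exp (t / (1 - t))
      have heq : t / (1 - t) + 1 = 1 / (1 - t) := by field_simp; ring
      linarith
    have h6 : Real.exp (-(t / (1 - t))) ≤ 1 - t := by
      rw [Real.exp_neg]
      rw [inv_le_comm₀ (Real.exp_pos _) h4]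
      calc (1 - t)⁻¹ = 1 / (1 - t) := by rw [one_div]
        _ ≤ Real.exp (t / (1 - t)) := h5
    refine le_trans ?_ h6
    apply Real.exp_le_exp.2
    rw [neg_div, neg_le_neg_iff]
    exact div_le_div_of_nonneg_left h1 (by linarith) (by linarith)
  set ε := Real.exp (-(x / ((1 - x) * (1 - q)))) with hε
  have hfin : ∀ s : Finset ℕ, ε ≤ ∏ i ∈ s, (1 - x * q ^ i) := by
    intro s
    have h1 : ∏ i ∈ s, Real.exp (-(x * q ^ i) / (1 - x)) ≤ ∏ i ∈ s, (1 - x * q ^ i) :=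
      Finset.prod_le_prod (fun i _ => (Real.exp_pos _).le) (fun i _ => key i)
    refine le_trans ?_ h1
    rw [← Real.exp_sum]
    apply Real.exp_le_exp.2
    have hsum : ∑ i ∈ s, x * q ^ i / (1 - x) ≤ x / ((1 - x) * (1 - q)) := by
      have hsummable : Summable fun i : ℕ => x * q ^ i / (1 - x) := by
        exact ((summable_geometric_of_lt_one hq0.le hq1).mul_left x).div_const _
      have h4 : (0:ℝ) < 1 - x := by linarith
      have := hsummable.sum_le_tsum s (fun i _ => by positivity)
      refine le_trans this ?_
      rw [tsum_div_const, tsum_mul_left, tsum_geometric_of_lt_one hq0.le hq1]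
      have hq' : (1:ℝ) - q ≠ 0 := by linarith
      apply le_of_eq
      field_simp
    have : ∑ i ∈ s, -(x * q ^ i) / (1 - x) = -∑ i ∈ s, x * q ^ i / (1 - x) := by
      rw [← Finset.sum_neg_distrib]
      exact Finset.sum_congr rfl fun i _ => by ring
    rw [this]
    linarith
  exact lt_of_lt_of_le (Real.exp_pos _) (tprod_ge_of_forall
    (multipliable_one_sub_real hq0 hq1 hx hx1.le) ε hfin)

lemma qpoch_shift {q : ℝ} (hq0 : 0 < q) (hq1 : q < 1) (z : ℂ) :
    qPochInf q z = (1 - z) * qPochInf q (z * q) := by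
  have hc : ∀ i : ℕ, (1 : ℂ) - (z * q) * (q:ℂ)^i = 1 - z * (q:ℂ)^(i+1) := by
    intro i; rw [pow_succ]; ring
  have hm : Multipliable fun i : ℕ => 1 - z * (q:ℂ)^(i+1) :=
    (multipliable_qpoch hq0 hq1 (z * q)).congr hc
  have := tprod_eq_zero_mul' (f := fun i : ℕ => 1 - z * (q:ℂ)^i) hm
  unfold qPochInf
  rw [tprod_congr hc]
  simpa using this

lemma qtheta_shift {q : ℝ} (hq0 : 0 < q) (hq1 : q < 1) {z : ℂ} (hz : z ≠ 0) :
    qTheta q (z / q) = -(z / q) * qTheta q z := by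
  have hqc : (q:ℂ) ≠ 0 := by exact_mod_cast hq0.ne'
  unfold qTheta
  have h1 : qPochInf q (z / q) = (1 - z / q) * qPochInf q z := by
    rw [qpoch_shift hq0 hq1 (z / q), div_mul_cancel₀ _ hqc]
  have h2 : qPochInf q ((q:ℂ) * z⁻¹) = (1 - (q:ℂ) * z⁻¹) * qPochInf q ((q:ℂ) * (z / q)⁻¹) := by
    have h3 : (q:ℂ) * (z / q)⁻¹ = ((q:ℂ) * z⁻¹) * q := by
      field_simp
    rw [h3, qpoch_shift hq0 hq1 ((q:ℂ) * z⁻¹)]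
  rw [h1, h2]
  have key : (1 - z / q) = -(z / q) * (1 - (q:ℂ) * z⁻¹) := by
    field_simp
    ring
  rw [key]
  ring

lemma qtheta_iterate {q : ℝ} (hq0 : 0 < q) (hq1 : q < 1) (N : ℕ) :
    ∃ w : ℂ, w ≠ 0 ∧ ∀ z : ℂ, z ≠ 0 →
      qTheta q (z / (q:ℂ)^N) = w * z^N * qTheta q z := by
  have hqc : (q:ℂ) ≠ 0 := by exact_mod_cast hq0.ne'
  induction N with
  | zero => exact ⟨1, one_ne_zero, fun z _ => by simp⟩
  | succ N ih =>
    obtain ⟨w, hw, hwz⟩ := ih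
    refine ⟨-w / (q:ℂ)^(N+1), by simp [hw, hqc], fun z hz => ?_⟩
    have hzq : z / q ≠ 0 := div_ne_zero hz hqc
    have h1 : z / (q:ℂ)^(N+1) = (z / q) / (q:ℂ)^N := by
      rw [div_div, ← pow_succ']
    rw [h1, hwz _ hzq, qtheta_shift hq0 hq1 hz]
    field_simp
    rw [div_pow]
    field_simp
    ring

lemma qpoch_iterate {q : ℝ} (hq0 : 0 < q) (hq1 : q < 1) (N : ℕ) : ∀ z : ℂ,
    qPochInf q (z / (q:ℂ)^N)
      = (∏ j ∈ Finset.range N, (1 - z / (q:ℂ)^(j+1))) * qPochInf q z := by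
  have hqc : (q:ℂ) ≠ 0 := by exact_mod_cast hq0.ne'
  induction N with
  | zero => intro z; simp
  | succ N ih =>
    intro z
    have h1 : z / (q:ℂ)^(N+1) = (z / q) / (q:ℂ)^N := by rw [div_div, ← pow_succ']
    rw [h1, ih (z / q)]
    have h2 : qPochInf q (z / q) = (1 - z / q) * qPochInf q z := by
      rw [qpoch_shift hq0 hq1 (z / q), div_mul_cancel₀ _ hqc]
    rw [h2, Finset.prod_range_succ']
    have h3 : ∀ j : ℕ, (1 : ℂ) - (z / q) / (q:ℂ)^(j+1) = 1 - z / (q:ℂ)^(j+1+1) := by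
      intro j; rw [div_div, ← pow_succ']
    simp_rw [h3]
    simp only [zero_add, pow_one]
    ring

lemma norm_factor (q : ℝ) (hq0 : 0 ≤ q) (z : ℂ) (i : ℕ) :
    ‖z * (q:ℂ)^i‖ = ‖z‖ * q ^ i := by
  rw [norm_mul, norm_pow, Complex.norm_real, Real.norm_eq_abs, _root_.abs_of_nonneg hq0]

lemma qpoch_norm_le {q : ℝ} (hq0 : 0 < q) (hq1 : q < 1) {z : ℂ} {m : ℝ} (hm : ‖z‖ ≤ m) :
    ‖qPochInf q z‖ ≤ ∏' i : ℕ, (1 + m * q ^ i) := by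
  have hm0 : 0 ≤ m := le_trans (norm_nonneg z) hm
  rw [qPochInf, (multipliable_qpoch hq0 hq1 z).norm_tprod]
  refine tprod_mono_real (fun i => norm_nonneg _) (fun i => ?_)
    ((multipliable_qpoch hq0 hq1 z).norm) (multipliable_one_add_real hq0 hq1 hm0)
  calc ‖1 - z * (q:ℂ)^i‖ ≤ ‖(1:ℂ)‖ + ‖z * (q:ℂ)^i‖ := norm_sub_le _ _
    _ = 1 + ‖z‖ * q ^ i := by rw [norm_one, norm_factor q hq0.le]
    _ ≤ 1 + m * q ^ i := by
        have h := mul_le_mul_of_nonneg_right hm (by positivity : (0:ℝ) ≤ q ^ i)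
        linarith

lemma qpoch_norm_ge {q : ℝ} (hq0 : 0 < q) (hq1 : q < 1) {z : ℂ} {m : ℝ} (hm : ‖z‖ ≤ m)
    (hm1 : m < 1) : (∏' i : ℕ, (1 - m * q ^ i)) ≤ ‖qPochInf q z‖ := by
  have hm0 : 0 ≤ m := le_trans (norm_nonneg z) hm
  rw [qPochInf, (multipliable_qpoch hq0 hq1 z).norm_tprod]
  refine tprod_mono_real (fun i => ?_) (fun i => ?_)
    (multipliable_one_sub_real hq0 hq1 hm0 hm1.le) ((multipliable_qpoch hq0 hq1 z).norm)
  · have h1 : q ^ i ≤ 1 := pow_le_one₀ hq0.le hq1.le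
    have h2 : m * q ^ i ≤ m := mul_le_of_le_one_right hm0 h1
    linarith
  · have h3 : ‖(1:ℂ)‖ - ‖z * (q:ℂ)^i‖ ≤ ‖1 - z * (q:ℂ)^i‖ := norm_sub_norm_le _ _
    rw [norm_one, norm_factor q hq0.le] at h3
    have h4 := mul_le_mul_of_nonneg_right hm (by positivity : (0:ℝ) ≤ q ^ i)
    linarith

lemma prod_ratio_bound {q R br cr : ℝ} (hq0 : 0 < q) (hq1 : q < 1) (hR0 : 0 < R)
    (hbr : 0 < br) (hbc : br < cr) (hRq : R * q < br) :
    ∃ C3 : ℝ, 0 ≤ C3 ∧ ∀ N : ℕ,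
      (∏ j ∈ Finset.range N, ((R * q^(j+1) + br) / (cr - R * q^(j+1)))) ≤ C3 := by
  have hcr : 0 < cr := lt_trans hbr hbc
  set t := (br/cr + 1)/2 with ht
  have htc : br/cr < 1 := (div_lt_one hcr).2 hbc
  have ht1 : t < 1 := by rw [ht]; linarith
  have ht0 : 0 < t := by
    have : 0 < br/cr := div_pos hbr hcr
    rw [ht]; linarith
  have htcr : br < t * cr := by
    have h1 : t * cr = (br + cr)/2 := by
      rw [ht]; field_simp
    rw [h1]; linarith
  set δ := (t*cr - br)/(R*(1+t)) with hδ
  have hδ0 : 0 < δ := by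
    apply div_pos (by linarith) (mul_pos hR0 (by linarith))
  obtain ⟨J, hJ⟩ := exists_pow_lt_of_lt_one hδ0 hq1
  set J' := J + 1 with hJ'
  have hJ'δ : q ^ J' < δ := lt_of_le_of_lt (pow_le_pow_of_le_one hq0.le hq1.le (by omega)) hJ
  have hden : ∀ m : ℕ, 1 ≤ m → 0 < cr - R * q^m := by
    intro m hm
    have h1 : q ^ m ≤ q := by
      calc q ^ m ≤ q ^ 1 := pow_le_pow_of_le_one hq0.le hq1.le hm
        _ = q := pow_one q
    have h2 : R * q ^ m ≤ R * q := mul_le_mul_of_nonneg_left h1 hR0.le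
    linarith
  have hgpos : ∀ m : ℕ, 1 ≤ m → 0 ≤ (R * q^m + br) / (cr - R * q^m) := by
    intro m hm
    have := hden m hm
    positivity
  set K := (R*q + br)/(cr - R*q) with hK
  have hden1 : 0 < cr - R * q := by
    have := hden 1 le_rfl; simpa using this
  have hgK : ∀ m : ℕ, 1 ≤ m → (R * q^m + br) / (cr - R * q^m) ≤ K := by
    intro m hm
    have h1 : q ^ m ≤ q := by
      calc q ^ m ≤ q ^ 1 := pow_le_pow_of_le_one hq0.le hq1.le hm
        _ = q := pow_one q
    have h2 : R * q ^ m ≤ R * q := mul_le_mul_of_nonneg_left h1 hR0.le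
    apply div_le_div₀ (by positivity) (by linarith) hden1 (by linarith)
  have hgt : ∀ m : ℕ, J' ≤ m → (R * q^m + br) / (cr - R * q^m) ≤ t := by
    intro m hm
    have hm1 : 1 ≤ m := le_trans (by omega) hm
    have h1 : q ^ m ≤ q ^ J' := pow_le_pow_of_le_one hq0.le hq1.le hm
    have h2 : q ^ m < δ := lt_of_le_of_lt h1 hJ'δ
    rw [div_le_iff₀ (hden m hm1)]
    have h3 : R * q^m * (1 + t) < t*cr - br := by
      have h4 : R * q^m * (1+t) < R * δ * (1+t) := by
        apply mul_lt_mul_of_pos_right _ (by linarith)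
        exact mul_lt_mul_of_pos_left h2 hR0
      have h5 : R * δ * (1+t) = t*cr - br := by
        rw [hδ]; field_simp
      linarith
    linarith [h3]
  set K' := max K 1 with hK'
  have hK'1 : 1 ≤ K' := le_max_right _ _
  refine ⟨K'^J', by positivity, fun N => ?_⟩
  have hbound_le : ∀ M : ℕ, M ≤ J' →
      (∏ j ∈ Finset.range M, ((R * q^(j+1) + br) / (cr - R * q^(j+1)))) ≤ K'^J' := by
    intro M hM
    calc (∏ j ∈ Finset.range M, ((R * q^(j+1) + br) / (cr - R * q^(j+1))))
        ≤ ∏ j ∈ Finset.range M, K' := by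
          apply Finset.prod_le_prod (fun j _ => hgpos (j+1) (by omega))
          intro j _
          exact le_trans (hgK (j+1) (by omega)) (le_max_left _ _)
      _ = K'^M := by rw [Finset.prod_const, Finset.card_range]
      _ ≤ K'^J' := pow_le_pow_right₀ hK'1 hM
  rcases le_or_gt N J' with hN | hN
  · exact hbound_le N hN
  · have hNM : J' + (N - J') = N := by omega
    rw [← hNM, Finset.prod_range_add]
    have h1 := hbound_le J' le_rfl
    have h2 : (∏ i ∈ Finset.range (N - J'),
        ((R * q^(J' + i + 1) + br) / (cr - R * q^(J' + i + 1)))) ≤ 1 := by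
      apply Finset.prod_le_one (fun i _ => hgpos (J' + i + 1) (by omega))
      intro i _
      exact le_trans (hgt (J' + i + 1) (by omega)) ht1.le
    calc (∏ j ∈ Finset.range J', ((R * q^(j+1) + br) / (cr - R * q^(j+1)))) *
          (∏ i ∈ Finset.range (N - J'), ((R * q^(J' + i + 1) + br) / (cr - R * q^(J' + i + 1))))
        ≤ K'^J' * 1 := by
          apply mul_le_mul h1 h2
            (Finset.prod_nonneg (fun i _ => hgpos (J' + i + 1) (by omega))) (by positivity)
      _ = K'^J' := mul_one _

lemma norm_qpow {q : ℝ} (hq0 : 0 < q) (x : ℂ) : ‖qpow q x‖ = q ^ x.re := by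
  rw [qpow, Complex.norm_exp, Real.rpow_def_of_pos hq0]
  congr 1
  simp [Complex.mul_re]
  ring

lemma qpow_ne_zero (q : ℝ) (x : ℂ) : qpow q x ≠ 0 := Complex.exp_ne_zero _

set_option maxHeartbeats 4000000 in
/-- The contour integrals over shrinking circles `|y| = q^N R` tend to zero. -/
theorem stmt13 (q k : ℝ) (hq0 : 0 < q) (hq1 : q < 1) (hk0 : 0 < k) (hk1 : k < 1)
    (n : ℕ) (lam1 lam2 : ℂ) (hre : 0 < (lam2 - lam1).re + n)
    (R : ℝ) (hR1 : q ^ ((1 - k) / 2) < R) (hR2 : R < q ^ ((k - 1) / 2)) :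
    Filter.Tendsto (fun N : ℕ =>
      (1 / (2 * (Real.pi : ℂ) * Complex.I)) *
        (∮ y in C(0, q ^ N * R),
          y ^ n *
            (qTheta q (qpow q (lam2 - lam1 + (k + 1) / 2) / y) /
              qTheta q (qpow q ((1 + k) / 2) / y)) *
            (qPochInf q (qpow q ((1 + k) / 2) / y) /
              qPochInf q (qpow q ((1 - k) / 2) / y)) / y))
      Filter.atTop (nhds 0) := by
  have hπ : (0:ℝ) < Real.pi := Real.pi_pos
  have hqc : (q:ℂ) ≠ 0 := Complex.ofReal_ne_zero.2 hq0.ne'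
  have hcr0 : (0:ℝ) < q ^ ((1-k)/2) := Real.rpow_pos_of_pos hq0 _
  have hR0 : 0 < R := lt_trans hcr0 hR1
  set re := (lam2 - lam1).re with hre_def
  have hρ : 0 < re + (n:ℝ) := hre
  set br := q ^ ((1+k)/2) with hbr_def
  set cr := q ^ ((1-k)/2) with hcr_def
  set A := q ^ (re + (k+1)/2) with hA_def
  have hbr0 : 0 < br := Real.rpow_pos_of_pos hq0 _
  have hcr0' : 0 < cr := hcr0
  have hA0 : 0 < A := Real.rpow_pos_of_pos hq0 _
  have hbrcr : br < cr := Real.rpow_lt_rpow_of_exponent_gt hq0 hq1 (by linarith)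
  have hcrR : cr < R := hR1
  have hRq : R * q < br := by
    have h1 : R * q < q ^ ((k-1)/2) * q := mul_lt_mul_of_pos_right hR2 hq0
    have h2 : q ^ ((k-1)/2) * q = br := by
      rw [hbr_def, show (1+k)/2 = (k-1)/2 + 1 by ring, Real.rpow_add hq0, Real.rpow_one]
    linarith
  have hAbr : A = q ^ re * br := by
    rw [hA_def, hbr_def, ← Real.rpow_add hq0]
    congr 1; ring
  -- complex constants
  set a := qpow q (lam2 - lam1 + ((k:ℂ) + 1) / 2) with ha_def
  set b := qpow q ((1 + (k:ℂ)) / 2) with hb_def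
  set c := qpow q ((1 - (k:ℂ)) / 2) with hc_def
  have ha0 : a ≠ 0 := qpow_ne_zero _ _
  have hb0 : b ≠ 0 := qpow_ne_zero _ _
  have hc0 : c ≠ 0 := qpow_ne_zero _ _
  have hnorm_a : ‖a‖ = A := by
    rw [ha_def, norm_qpow hq0, hA_def]
    congr 1
    rw [show ((k:ℂ) + 1)/2 = (((k+1)/2 : ℝ) : ℂ) by push_cast; ring]
    rw [Complex.add_re, Complex.ofReal_re, hre_def]
  have hnorm_b : ‖b‖ = br := by
    rw [hb_def, norm_qpow hq0, hbr_def]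
    congr 1
    rw [show (1 + (k:ℂ))/2 = (((1+k)/2 : ℝ) : ℂ) by push_cast; ring, Complex.ofReal_re]
  have hnorm_c : ‖c‖ = cr := by
    rw [hc_def, norm_qpow hq0, hcr_def]
    congr 1
    rw [show (1 - (k:ℂ))/2 = (((1-k)/2 : ℝ) : ℂ) by push_cast; ring, Complex.ofReal_re]
  -- fractions
  have hbrR1 : br / R < 1 := (div_lt_one hR0).2 (by linarith)
  have hqRbr : q * R / br < 1 := (div_lt_one hbr0).2 (by rw [mul_comm]; exact hRq)
  have hcrR1 : cr / R < 1 := (div_lt_one hR0).2 hcrR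
  -- tprod constants
  set M1 := (∏' i : ℕ, (1 + (A/R) * q ^ i)) * (∏' i : ℕ, (1 + (q*R/A) * q ^ i))
      * (∏' i : ℕ, (1 + q * q ^ i)) with hM1_def
  set L1 := (∏' i : ℕ, (1 - (br/R) * q ^ i)) * (∏' i : ℕ, (1 - (q*R/br) * q ^ i))
      * (∏' i : ℕ, (1 - q * q ^ i)) with hL1_def
  set M2 := (∏' i : ℕ, (1 + (br/R) * q ^ i)) with hM2_def
  set L2 := (∏' i : ℕ, (1 - (cr/R) * q ^ i)) with hL2_def
  have hM1_0 : 0 ≤ M1 := by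
    have h1 := tprod_one_add_ge_one hq0 hq1 (by positivity : (0:ℝ) ≤ A/R)
    have h2 := tprod_one_add_ge_one hq0 hq1 (by positivity : (0:ℝ) ≤ q*R/A)
    have h3 := tprod_one_add_ge_one hq0 hq1 hq0.le
    rw [hM1_def]
    have x1 : (0:ℝ) < ∏' i : ℕ, (1 + (A/R) * q ^ i) := lt_of_lt_of_le one_pos h1
    have x2 : (0:ℝ) < ∏' i : ℕ, (1 + (q*R/A) * q ^ i) := lt_of_lt_of_le one_pos h2
    have x3 : (0:ℝ) < ∏' i : ℕ, (1 + q * q ^ i) := lt_of_lt_of_le one_pos h3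
    exact (mul_pos (mul_pos x1 x2) x3).le
  have hL1_0 : 0 < L1 := by
    have h1 := tprod_one_sub_pos hq0 hq1 (by positivity : (0:ℝ) ≤ br/R) hbrR1
    have h2 := tprod_one_sub_pos hq0 hq1 (by positivity : (0:ℝ) ≤ q*R/br) hqRbr
    have h3 := tprod_one_sub_pos hq0 hq1 hq0.le hq1
    rw [hL1_def]; exact mul_pos (mul_pos h1 h2) h3
  have hM2_0 : 0 ≤ M2 := by
    have h1 := tprod_one_add_ge_one hq0 hq1 (by positivity : (0:ℝ) ≤ br/R)
    rw [hM2_def]; linarith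
  have hL2_0 : 0 < L2 := tprod_one_sub_pos hq0 hq1 (by positivity) hcrR1
  obtain ⟨C3, hC3_0, hC3⟩ := prod_ratio_bound hq0 hq1 hR0 hbr0 hbrcr hRq
  set D := R^n * (M1/L1) * (C3 * (M2/L2)) with hD_def
  have hD0 : 0 ≤ D := by positivity
  set qρ := q ^ (re + (n:ℝ)) with hqρ_def
  have hqρ0 : 0 ≤ qρ := (Real.rpow_pos_of_pos hq0 _).le
  have hqρ1 : qρ < 1 := Real.rpow_lt_one hq0.le hq1 hρ
  have hqre0 : (0:ℝ) ≤ q ^ re := (Real.rpow_pos_of_pos hq0 _).le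
  apply squeeze_zero_norm (a := fun N : ℕ => D * qρ^N)
  · -- the bound
    intro N
    have hrN : (0:ℝ) < q ^ N * R := by positivity
    have hpoint : ∀ y ∈ Metric.sphere (0:ℂ) (q ^ N * R),
        ‖y ^ n * (qTheta q (a / y) / qTheta q (b / y)) *
          (qPochInf q (b / y) / qPochInf q (c / y)) / y‖ ≤ D * qρ^N / (q ^ N * R) := by
      intro y hy
      rw [mem_sphere_zero_iff_norm] at hy
      have hy0 : y ≠ 0 := by
        intro h; rw [h, norm_zero] at hy; exact hrN.ne hy
      set u := y / (q:ℂ)^N with hu_def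
      have hqN : ((q:ℂ)^N) ≠ 0 := pow_ne_zero _ hqc
      have hu0 : u ≠ 0 := div_ne_zero hy0 hqN
      have hnormqN : ∀ m : ℕ, ‖(q:ℂ)^m‖ = q^m := by
        intro m
        rw [norm_pow, Complex.norm_real, Real.norm_eq_abs, _root_.abs_of_nonneg hq0.le]
      have hu_norm : ‖u‖ = R := by
        rw [hu_def, norm_div, hy, hnormqN]
        field_simp
      have huy : u * (q:ℂ)^N = y := by rw [hu_def, div_mul_cancel₀ _ hqN]
      have harg : ∀ z : ℂ, z / y = z / u / (q:ℂ)^N := by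
        intro z; rw [div_div, huy]
      -- theta ratio
      obtain ⟨w, hw0, hwz⟩ := qtheta_iterate hq0 hq1 N
      have hΘratio : ‖qTheta q (a / y)‖ / ‖qTheta q (b / y)‖
          ≤ (q ^ re)^N * (M1 / L1) := by
        have hTa : ‖qTheta q (a / y)‖ = ‖w‖ * (A/R)^N * ‖qTheta q (a/u)‖ := by
          rw [harg a, hwz (a/u) (div_ne_zero ha0 hu0), norm_mul, norm_mul, norm_pow,
            norm_div, hnorm_a, hu_norm]
        have hTb : ‖qTheta q (b / y)‖ = ‖w‖ * (br/R)^N * ‖qTheta q (b/u)‖ := by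
          rw [harg b, hwz (b/u) (div_ne_zero hb0 hu0), norm_mul, norm_mul, norm_pow,
            norm_div, hnorm_b, hu_norm]
        have hwpos : 0 < ‖w‖ := norm_pos_iff.2 hw0
        have hwbr : ‖w‖ * (br/R)^N ≠ 0 := by positivity
        have hAR : (A/R)^N = (q^re)^N * (br/R)^N := by
          rw [← mul_pow]
          congr 1
          rw [hAbr]; field_simp
        have hX : ‖qTheta q (a/u)‖ ≤ M1 := by
          rw [qTheta, norm_mul, norm_mul, hM1_def]
          have e1 : ‖a/u‖ ≤ A/R := le_of_eq (by rw [norm_div, hnorm_a, hu_norm])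
          have e2 : ‖(q:ℂ) * (a/u)⁻¹‖ ≤ q*R/A := le_of_eq (by
            rw [norm_mul, norm_inv, norm_div, hnorm_a, hu_norm, Complex.norm_real,
              Real.norm_eq_abs, _root_.abs_of_nonneg hq0.le]
            field_simp)
          have e3 : ‖((q:ℝ):ℂ)‖ ≤ q := le_of_eq (by
            rw [Complex.norm_real, Real.norm_eq_abs, _root_.abs_of_nonneg hq0.le])
          have b1 := qpoch_norm_le hq0 hq1 e1
          have b2 := qpoch_norm_le hq0 hq1 e2
          have b3 := qpoch_norm_le hq0 hq1 e3
          have t1 := tprod_one_add_ge_one hq0 hq1 (by positivity : (0:ℝ) ≤ A/R)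
          have t2 := tprod_one_add_ge_one hq0 hq1 (by positivity : (0:ℝ) ≤ q*R/A)
          have t3 := tprod_one_add_ge_one hq0 hq1 hq0.le
          have t1' : (0:ℝ) ≤ ∏' i : ℕ, (1 + (A/R) * q ^ i) := le_trans zero_le_one t1
          have t2' : (0:ℝ) ≤ ∏' i : ℕ, (1 + (q*R/A) * q ^ i) := le_trans zero_le_one t2
          exact mul_le_mul (mul_le_mul b1 b2 (norm_nonneg _) t1') b3 (norm_nonneg _)
            (mul_nonneg t1' t2')
        have hY : L1 ≤ ‖qTheta q (b/u)‖ := by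
          rw [qTheta, norm_mul, norm_mul, hL1_def]
          have e1 : ‖b/u‖ ≤ br/R := le_of_eq (by rw [norm_div, hnorm_b, hu_norm])
          have e2 : ‖(q:ℂ) * (b/u)⁻¹‖ ≤ q*R/br := le_of_eq (by
            rw [norm_mul, norm_inv, norm_div, hnorm_b, hu_norm, Complex.norm_real,
              Real.norm_eq_abs, _root_.abs_of_nonneg hq0.le]
            field_simp)
          have e3 : ‖((q:ℝ):ℂ)‖ ≤ q := le_of_eq (by
            rw [Complex.norm_real, Real.norm_eq_abs, _root_.abs_of_nonneg hq0.le])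
          have b1 := qpoch_norm_ge hq0 hq1 e1 hbrR1
          have b2 := qpoch_norm_ge hq0 hq1 e2 hqRbr
          have b3 := qpoch_norm_ge hq0 hq1 e3 hq1
          have t2 := (tprod_one_sub_pos hq0 hq1 (by positivity : (0:ℝ) ≤ q*R/br) hqRbr).le
          have t3 := (tprod_one_sub_pos hq0 hq1 hq0.le hq1).le
          exact mul_le_mul (mul_le_mul b1 b2 t2 (norm_nonneg _)) b3 t3
            (mul_nonneg (norm_nonneg _) (norm_nonneg _))
        rw [hTa, hTb, hAR]
        have : ‖w‖ * ((q^re)^N * (br/R)^N) * ‖qTheta q (a/u)‖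
            = ((q^re)^N * ‖qTheta q (a/u)‖) * (‖w‖ * (br/R)^N) := by ring
        rw [this, show ‖w‖ * (br/R)^N * ‖qTheta q (b/u)‖
            = ‖qTheta q (b/u)‖ * (‖w‖ * (br/R)^N) by ring,
          mul_div_mul_right _ _ hwbr, mul_div_assoc]
        have hYpos : 0 < ‖qTheta q (b/u)‖ := lt_of_lt_of_le hL1_0 hY
        exact mul_le_mul_of_nonneg_left
          (div_le_div₀ hM1_0 hX hL1_0 hY) (by positivity)
      -- poch ratio
      have hPratio : ‖qPochInf q (b / y)‖ / ‖qPochInf q (c / y)‖ ≤ C3 * (M2 / L2) := by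
        have hPb : ‖qPochInf q (b / y)‖
            = (∏ j ∈ Finset.range N, ‖1 - (b/u) / (q:ℂ)^(j+1)‖) * ‖qPochInf q (b/u)‖ := by
          rw [harg b, qpoch_iterate hq0 hq1 N (b/u), norm_mul, norm_prod]
        have hPc : ‖qPochInf q (c / y)‖
            = (∏ j ∈ Finset.range N, ‖1 - (c/u) / (q:ℂ)^(j+1)‖) * ‖qPochInf q (c/u)‖ := by
          rw [harg c, qpoch_iterate hq0 hq1 N (c/u), norm_mul, norm_prod]
        rw [hPb, hPc, mul_div_mul_comm]
        have hprodle : (∏ j ∈ Finset.range N, ‖1 - (b/u) / (q:ℂ)^(j+1)‖)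
            / (∏ j ∈ Finset.range N, ‖1 - (c/u) / (q:ℂ)^(j+1)‖) ≤ C3 := by
          rw [← Finset.prod_div_distrib]
          refine le_trans (Finset.prod_le_prod (fun j _ => by positivity) ?_) (hC3 N)
          intro j _
          have hs0 : (0:ℝ) < R * q^(j+1) := by positivity
          have hqj : q^(j+1) ≤ q := by
            calc q^(j+1) ≤ q^1 := pow_le_pow_of_le_one hq0.le hq1.le (by omega)
              _ = q := pow_one q
          have hds : (0:ℝ) < cr - R*q^(j+1) := by
            have h2 : R * q^(j+1) ≤ R * q := mul_le_mul_of_nonneg_left hqj hR0.le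
            linarith
          have hnum : ‖1 - (b/u)/(q:ℂ)^(j+1)‖ ≤ (R*q^(j+1) + br)/(R*q^(j+1)) := by
            refine le_trans (norm_sub_le _ _) ?_
            rw [norm_one, norm_div, norm_div, hnorm_b, hu_norm, hnormqN]
            apply le_of_eq
            field_simp
            try ring
          have hden : (cr - R*q^(j+1))/(R*q^(j+1)) ≤ ‖1 - (c/u)/(q:ℂ)^(j+1)‖ := by
            rw [norm_sub_rev]
            refine le_trans ?_ (norm_sub_norm_le _ _)
            rw [norm_one, norm_div, norm_div, hnorm_c, hu_norm, hnormqN]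
            apply le_of_eq
            field_simp
          calc ‖1 - (b/u)/(q:ℂ)^(j+1)‖ / ‖1 - (c/u)/(q:ℂ)^(j+1)‖
              ≤ ((R*q^(j+1)+br)/(R*q^(j+1))) / ((cr - R*q^(j+1))/(R*q^(j+1))) :=
                div_le_div₀ (by positivity) hnum (by positivity) hden
            _ = (R*q^(j+1)+br)/(cr - R*q^(j+1)) := by
                rw [div_div_div_cancel_right₀ hs0.ne']
        have hP2 : ‖qPochInf q (b/u)‖ / ‖qPochInf q (c/u)‖ ≤ M2/L2 := by
          rw [hM2_def, hL2_def]
          have e1 : ‖b/u‖ ≤ br/R := le_of_eq (by rw [norm_div, hnorm_b, hu_norm])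
          have e2 : ‖c/u‖ ≤ cr/R := le_of_eq (by rw [norm_div, hnorm_c, hu_norm])
          exact div_le_div₀ (le_trans zero_le_one
              (tprod_one_add_ge_one hq0 hq1 (by positivity : (0:ℝ) ≤ br/R)))
            (qpoch_norm_le hq0 hq1 e1)
            (tprod_one_sub_pos hq0 hq1 (by positivity : (0:ℝ) ≤ cr/R) hcrR1)
            (qpoch_norm_ge hq0 hq1 e2 hcrR1)
        exact mul_le_mul hprodle hP2
          (div_nonneg (norm_nonneg _) (norm_nonneg _)) hC3_0
      -- assemble
      have hqρeq : qρ^N = (q^re)^N * (q^n)^N := by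
        rw [← mul_pow, hqρ_def, Real.rpow_add hq0, Real.rpow_natCast]
      have hrn : (q^N*R)^n = (q^n)^N * R^n := by
        rw [mul_pow, ← pow_mul, ← pow_mul, Nat.mul_comm]
      simp only [norm_div, norm_mul, norm_pow, hy]
      gcongr ?_ / _
      calc (q^N*R)^n * (‖qTheta q (a / y)‖ / ‖qTheta q (b / y)‖)
            * (‖qPochInf q (b / y)‖ / ‖qPochInf q (c / y)‖)
          ≤ (q^N*R)^n * ((q^re)^N * (M1/L1)) * (C3*(M2/L2)) := by
            have h1 : (0:ℝ) ≤ (q^N*R)^n := by positivity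
            refine mul_le_mul (mul_le_mul le_rfl hΘratio
              (div_nonneg (norm_nonneg _) (norm_nonneg _)) h1) hPratio
              (div_nonneg (norm_nonneg _) (norm_nonneg _)) ?_
            exact mul_nonneg h1 (mul_nonneg (by positivity)
              (div_nonneg hM1_0 hL1_0.le))
        _ = D * qρ^N := by
            rw [hD_def, hqρeq, hrn]
            ring
    -- from the circle integral bound
    have hI := circleIntegral.norm_integral_le_of_norm_le_const hrN.le hpoint
    have hpref : ‖(1:ℂ) / (2 * (Real.pi:ℂ) * Complex.I)‖ = 1/(2*Real.pi) := by
      rw [norm_div, norm_one, norm_mul, norm_mul, Complex.norm_I, Complex.norm_real]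
      simp [Real.norm_eq_abs, _root_.abs_of_pos hπ]
    rw [norm_mul, hpref]
    have h3 := mul_le_mul_of_nonneg_left hI (by positivity : (0:ℝ) ≤ 1/(2*Real.pi))
    refine le_trans h3 (le_of_eq ?_)
    have h4 : (q:ℝ)^N*R ≠ 0 := hrN.ne'
    have h5 : Real.pi ≠ 0 := hπ.ne'
    field_simp
  · have h := (tendsto_pow_atTop_nhds_zero_of_lt_one hqρ0 hqρ1).const_mul D
    simpa using h
end
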